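/- In the Z_4 toric code, the quotient group H / K has cardinality 4 and every element x of H / K satisfies x + x = 0; the four cosets are represented by (0,0), (1,1), (2,0), (3,1), and the twists of these representatives are θ = 1, i, 1, −i respectively. (Thus condensing e²m² in the Z_4 toric code yields the doubled semion anyons {1, s, ss̄, s̄} with twists θ(1)=1, θ(s)=i, θ(ss̄)=1, θ(s̄)=−i.) -/
import Mathlib


/-- Anyons of the Z_4 toric code: the group G = ZMod 4 × ZMod 4. -/
abbrev Z4Anyon := ZMod 4 × ZMod 4

/-- Topological twist θ(p,q) = i^(p̃·q̃) of the Z_4 toric code. -/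
noncomputable def z4Twist (a : Z4Anyon) : ℂ :=
  Complex.I ^ (a.1.val * a.2.val)

/-- Mutual braiding b((p₁,q₁),(p₂,q₂)) = i^(p̃₁·q̃₂ + p̃₂·q̃₁) of the Z_4 toric code. -/
noncomputable def z4Braiding (a a' : Z4Anyon) : ℂ :=
  Complex.I ^ (a.1.val * a'.2.val + a'.1.val * a.2.val)

/-- K: the subgroup of G generated by the boson e²m² = (2,2). -/
def z4K : AddSubgroup Z4Anyon :=
  AddSubgroup.closure {((2 : ZMod 4), (2 : ZMod 4))}

/-- H: the set of anyons with trivial mutual braiding with (2,2) (deconfined anyons). -/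
noncomputable def z4H : Set Z4Anyon :=
  {a | z4Braiding a (2, 2) = 1}

lemma I_pow_eq_one_iff (n : ℕ) : Complex.I ^ n = 1 ↔ n % 4 = 0 := by
  rw [← Nat.div_add_mod n 4, pow_add, pow_mul, Complex.I_pow_four, one_pow, one_mul]
  have h : n % 4 < 4 := Nat.mod_lt _ (by norm_num)
  interval_cases h' : n % 4 <;> norm_num [pow_succ, Complex.ext_iff] <;> omega

lemma mem_z4K (x : Z4Anyon) : x ∈ z4K ↔ x = 0 ∨ x = (2, 2) := by
  rw [z4K, AddSubgroup.mem_closure_singleton]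
  constructor
  · rintro ⟨n, rfl⟩
    have hsm : n • ((2 : ZMod 4), (2 : ZMod 4)) = ((n : ZMod 4) * 2, (n : ZMod 4) * 2) := by
      rw [Prod.smul_mk, zsmul_eq_mul]
    have h4 : (4 : ZMod 4) = 0 := by decide
    rcases Int.even_or_odd n with ⟨k, rfl⟩ | ⟨k, rfl⟩
    · left
      rw [hsm, Prod.mk_eq_zero]
      constructor <;> · push_cast; ring_nf; rw [h4, mul_zero]
    · right
      rw [hsm]
      have : ((2 * k + 1 : ℤ) : ZMod 4) * 2 = 2 := by
        push_cast; ring_nf; rw [h4, mul_zero, add_zero]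
      rw [this]
  · rintro (rfl | rfl)
    · exact ⟨0, by simp⟩
    · exact ⟨1, by simp⟩

lemma mem_z4H (a : Z4Anyon) : a ∈ z4H ↔ (a.1.val + a.2.val) % 2 = 0 := by
  show Complex.I ^ (a.1.val * (2 : ZMod 4).val + (2 : ZMod 4).val * a.2.val) = 1 ↔ _
  rw [I_pow_eq_one_iff, show (2 : ZMod 4).val = 2 from rfl]
  omega

lemma mk_ne (a b : Z4Anyon) (h : ¬(-a + b = 0 ∨ -a + b = (2, 2))) :
    (QuotientAddGroup.mk a : Z4Anyon ⧸ z4K) ≠ QuotientAddGroup.mk b :=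
  fun he => h ((mem_z4K _).mp (QuotientAddGroup.eq.mp he))

lemma z4_set_eq :
    (QuotientAddGroup.mk '' z4H : Set (Z4Anyon ⧸ z4K)) =
      {QuotientAddGroup.mk ((0 : ZMod 4), (0 : ZMod 4)),
       QuotientAddGroup.mk ((1 : ZMod 4), (1 : ZMod 4)),
       QuotientAddGroup.mk ((2 : ZMod 4), (0 : ZMod 4)),
       QuotientAddGroup.mk ((3 : ZMod 4), (1 : ZMod 4))} := by
  ext x
  constructor
  · rintro ⟨⟨p, q⟩, hH, rfl⟩
    rw [mem_z4H] at hH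
    simp only [Set.mem_insert_iff, Set.mem_singleton_iff, QuotientAddGroup.eq, mem_z4K]
    fin_cases p <;> fin_cases q <;> revert hH <;> decide
  · intro hx
    simp only [Set.mem_insert_iff, Set.mem_singleton_iff] at hx
    rcases hx with rfl | rfl | rfl | rfl
    · exact ⟨_, (mem_z4H _).mpr (by decide), rfl⟩
    · exact ⟨_, (mem_z4H _).mpr (by decide), rfl⟩
    · exact ⟨_, (mem_z4H _).mpr (by decide), rfl⟩
    · exact ⟨_, (mem_z4H _).mpr (by decide), rfl⟩

/-- in the Z_4 toric code, the quotient H / K (realized as the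
image of H in G / K) has cardinality 4, every element x satisfies x + x = 0,
the four cosets are represented by (0,0), (1,1), (2,0), (3,1), and the twists
of these representatives are 1, i, 1, −i: condensing e²m² yields the doubled
semion anyons {1, s, ss̄, s̄}. -/
theorem z4_condensation_doubled_semion :
    Nat.card ((QuotientAddGroup.mk '' z4H : Set (Z4Anyon ⧸ z4K))) = 4 ∧
    (∀ x ∈ (QuotientAddGroup.mk '' z4H : Set (Z4Anyon ⧸ z4K)), x + x = 0) ∧
    (QuotientAddGroup.mk '' z4H : Set (Z4Anyon ⧸ z4K)) =
      {QuotientAddGroup.mk ((0 : ZMod 4), (0 : ZMod 4)),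
       QuotientAddGroup.mk ((1 : ZMod 4), (1 : ZMod 4)),
       QuotientAddGroup.mk ((2 : ZMod 4), (0 : ZMod 4)),
       QuotientAddGroup.mk ((3 : ZMod 4), (1 : ZMod 4))} ∧
    z4Twist (0, 0) = 1 ∧ z4Twist (1, 1) = Complex.I ∧
    z4Twist (2, 0) = 1 ∧ z4Twist (3, 1) = -Complex.I := by
  refine ⟨?_, ?_, z4_set_eq, ?_, ?_, ?_, ?_⟩
  · rw [z4_set_eq, Nat.card_coe_set_eq]
    rw [Set.ncard_insert_of_notMem (by
        simp only [Set.mem_insert_iff, Set.mem_singleton_iff]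
        push_neg
        exact ⟨mk_ne _ _ (by decide), mk_ne _ _ (by decide), mk_ne _ _ (by decide)⟩),
      Set.ncard_insert_of_notMem (by
        simp only [Set.mem_insert_iff, Set.mem_singleton_iff]
        push_neg
        exact ⟨mk_ne _ _ (by decide), mk_ne _ _ (by decide)⟩),
      Set.ncard_insert_of_notMem (by
        simp only [Set.mem_singleton_iff]
        exact mk_ne _ _ (by decide)),
      Set.ncard_singleton]
  · rw [z4_set_eq]
    rintro x hx
    simp only [Set.mem_insert_iff, Set.mem_singleton_iff] at hx
    rcases hx with rfl | rfl | rfl | rfl <;>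
      · rw [← QuotientAddGroup.mk_add, QuotientAddGroup.eq_zero_iff, mem_z4K]
        decide
  · simp [z4Twist]
  · norm_num [z4Twist, show ((1 : ZMod 4)).val = 1 from rfl]
  · norm_num [z4Twist, show ((2 : ZMod 4)).val = 2 from rfl, show ((0 : ZMod 4)).val = 0 from rfl]
  · norm_num [z4Twist, show ((3 : ZMod 4)).val = 3 from rfl, show ((1 : ZMod 4)).val = 1 from rfl,
      pow_succ, Complex.I_sq]
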